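/- Let ξ₁,…,ξ_k be nonzero vectors in ℝ^d satisfying only condition (ii): there is no ω ∈ ℝ^d with ⟨ω,ξᵢ⟩ > 0 for all i. Then for any real numbers f(ξ₁),…,f(ξ_k), min_{γ∈ℝ^d} max_i [f(ξᵢ) − ⟨ξᵢ,γ⟩] equals the maximum of Σᵢ pᵢ f(ξᵢ) over all extreme points p of the convex set of risk-neutral probability laws on {ξ₁,…,ξ_k}; these extreme points have support either on families of size d+1 in general position in ℝ^d, or on families of size m+1 with m < d that lie in an m-dimensional subspace and are in general position within that subspace. -/

import Mathlib

set_option linter.unusedSectionVars false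
set_option maxHeartbeats 1000000

noncomputable section

/-- Standard inner product on ℝ^d. -/
def dotp {d : ℕ} (u v : Fin d → ℝ) : ℝ := ∑ i, u i * v i

namespace Stmt9Aux


variable {E : Type*} [NormedAddCommGroup E] [NormedSpace ℝ E] [FiniteDimensional ℝ E]

def coneOf {n : ℕ} (w : Fin n → E) : Set E :=
  {x | ∃ q : Fin n → ℝ, (∀ i, 0 ≤ q i) ∧ ∑ i, q i • w i = x}

lemma zero_mem_coneOf {n : ℕ} (w : Fin n → E) : (0:E) ∈ coneOf w :=
  ⟨0, fun _ => le_rfl, by simp⟩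

lemma smul_mem_coneOf {n : ℕ} {w : Fin n → E} {x : E} (hx : x ∈ coneOf w) {t : ℝ}
    (ht : 0 ≤ t) : t • x ∈ coneOf w := by
  obtain ⟨q, hq, hqx⟩ := hx
  exact ⟨t • q, fun i => mul_nonneg ht (hq i), by
    simp only [Pi.smul_apply, smul_eq_mul, mul_smul, ← Finset.smul_sum, hqx]⟩

lemma mem_coneOf {n : ℕ} (w : Fin n → E) (i : Fin n) : w i ∈ coneOf w := by
  refine ⟨fun j => if j = i then 1 else 0, fun j => by positivity, ?_⟩
  simp [ite_smul]

lemma convex_coneOf {n : ℕ} (w : Fin n → E) : Convex ℝ (coneOf w) := by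
  rintro x ⟨q, hq, rfl⟩ y ⟨r, hr, rfl⟩ a b ha hb _
  refine ⟨a • q + b • r, fun i => add_nonneg (mul_nonneg ha (hq i)) (mul_nonneg hb (hr i)), ?_⟩
  simp only [Pi.add_apply, Pi.smul_apply, smul_eq_mul, add_smul, mul_smul,
    Finset.sum_add_distrib, ← Finset.smul_sum]



lemma cara {n : ℕ} (w : Fin n → E) :
    ∀ (N : ℕ) (q : Fin n → ℝ), (Finset.univ.filter (fun i => q i ≠ 0)).card ≤ N →
    (∀ i, 0 ≤ q i) →
    ∃ q' : Fin n → ℝ, (∀ i, 0 ≤ q' i) ∧ ∑ i, q' i • w i = ∑ i, q i • w i ∧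
      LinearIndependent ℝ (fun i : {i // q' i ≠ 0} => w i) := by
  intro N
  induction N with
  | zero =>
    intro q hcard hq
    refine ⟨q, hq, rfl, ?_⟩
    have : ∀ i, q i = 0 := by
      intro i
      by_contra h
      have : i ∈ Finset.univ.filter (fun i => q i ≠ 0) := by simp [h]
      have := Finset.card_pos.2 ⟨i, this⟩
      omega
    have : IsEmpty {i // q i ≠ 0} := ⟨fun ⟨i, hi⟩ => hi (this i)⟩
    exact linearIndependent_empty_type
  | succ N ih =>
    intro q hcard hq
    by_cases hli : LinearIndependent ℝ (fun i : {i // q i ≠ 0} => w i)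
    · exact ⟨q, hq, rfl, hli⟩
    · -- extract a nontrivial relation supported on the support of q, with a positive entry
      obtain ⟨g, hg0, j, hgj⟩ := Fintype.not_linearIndependent_iff.1 hli
      have hrel : ∃ c : Fin n → ℝ, (∀ i, q i = 0 → c i = 0) ∧ (∑ i, c i • w i = 0) ∧
          ∃ i, 0 < c i := by
        set c : Fin n → ℝ := fun i => if h : q i ≠ 0 then g ⟨i, h⟩ else 0 with hc
        have hsupp : ∀ i, q i = 0 → c i = 0 := fun i hi => by simp [hc, hi]
        have hsum : ∑ i, c i • w i = 0 := by
          have h1 : ∑ i, c i • w i =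
              ∑ i ∈ Finset.univ.filter (fun i => q i ≠ 0), c i • w i := by
            refine (Finset.sum_subset (Finset.filter_subset _ _) ?_).symm
            intro i _ hi
            simp only [Finset.mem_filter, Finset.mem_univ, true_and, not_not] at hi
            simp [hsupp i hi]
          have h2 : ∑ i ∈ Finset.univ.filter (fun i => q i ≠ 0), c i • w i =
              ∑ i : {i // q i ≠ 0}, c i.1 • w i.1 :=
            Finset.sum_subtype _ (fun i => by simp) _
          have h3 : ∑ i : {i // q i ≠ 0}, c i.1 • w i.1 =
              ∑ i : {i // q i ≠ 0}, g i • w i.1 := by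
            refine Finset.sum_congr rfl fun i _ => ?_
            simp [hc, i.2]
          rw [h1, h2, h3, hg0]
        rcases lt_or_gt_of_ne hgj with h | h
        · refine ⟨-c, fun i hi => by simp [hsupp i hi], by
            simp only [Pi.neg_apply, neg_smul, Finset.sum_neg_distrib, hsum, neg_zero], ⟨j, ?_⟩⟩
          have : c j.1 = g j := by simp [hc, j.2]
          simp [this]; linarith
        · exact ⟨c, hsupp, hsum, ⟨j, by simpa [hc, j.2] using h⟩⟩
      obtain ⟨c, hsupp, hcsum, i₁, hi₁⟩ := hrel
      set s := Finset.univ.filter (fun i => 0 < c i) with hs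
      have hsne : s.Nonempty := ⟨i₁, by simp [hs, hi₁]⟩
      obtain ⟨i₀, hi₀s, hi₀⟩ := Finset.exists_mem_eq_inf' hsne (fun i => q i / c i)
      set t := s.inf' hsne (fun i => q i / c i) with ht
      have hci₀ : 0 < c i₀ := by simpa [hs] using hi₀s
      have hqi₀ : q i₀ ≠ 0 := fun h => by simp [hsupp i₀ h] at hci₀
      have htnn : 0 ≤ t := by
        rw [ht]
        apply Finset.le_inf'
        intro i his
        have hci : 0 < c i := by simpa [hs] using his
        exact div_nonneg (hq i) hci.le
      set q' : Fin n → ℝ := fun i => q i - t * c i with hq'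
      have hq'nn : ∀ i, 0 ≤ q' i := by
        intro i
        rcases le_or_gt (c i) 0 with h | h
        · have : t * c i ≤ 0 := mul_nonpos_of_nonneg_of_nonpos htnn h
          simp only [hq']; linarith [hq i]
        · have his : i ∈ s := by simp [hs, h]
          have : t ≤ q i / c i := Finset.inf'_le _ his
          have := (le_div_iff₀ h).1 this
          simp only [hq']; linarith
      have hq'sum : ∑ i, q' i • w i = ∑ i, q i • w i := by
        simp only [hq', sub_smul, Finset.sum_sub_distrib, mul_smul, ← Finset.smul_sum, hcsum,
          smul_zero, sub_zero]
      have hq'i₀ : q' i₀ = 0 := by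
        show q i₀ - t * c i₀ = 0
        rw [hi₀]
        field_simp
        simp
      have hsub : Finset.univ.filter (fun i => q' i ≠ 0) ⊆
          (Finset.univ.filter (fun i => q i ≠ 0)).erase i₀ := by
        intro i hi
        simp only [Finset.mem_filter, Finset.mem_univ, true_and] at hi
        rw [Finset.mem_erase]
        constructor
        · rintro rfl; exact hi hq'i₀
        · simp only [Finset.mem_filter, Finset.mem_univ, true_and]
          intro h
          exact hi (by simp [hq', hsupp i h, h])
      have hcard' : (Finset.univ.filter (fun i => q' i ≠ 0)).card ≤ N := by
        have h1 := Finset.card_le_card hsub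
        have h2 : i₀ ∈ Finset.univ.filter (fun i => q i ≠ 0) := by simp [hqi₀]
        rw [Finset.card_erase_of_mem h2] at h1
        omega
      obtain ⟨q'', h1, h2, h3⟩ := ih q' hcard' hq'nn
      exact ⟨q'', h1, by rw [h2, hq'sum], h3⟩




lemma isClosed_coneSub {n : ℕ} (w : Fin n → E) (T : Finset (Fin n))
    (hli : LinearIndependent ℝ (fun i : {i // i ∈ T} => w i)) :
    IsClosed {x | ∃ q : Fin n → ℝ, (∀ i, 0 ≤ q i) ∧ (∀ i, i ∉ T → q i = 0) ∧
      ∑ i, q i • w i = x} := by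
  set L : ({i // i ∈ T} → ℝ) →ₗ[ℝ] E :=
    { toFun := fun q => ∑ i, q i • w i.1
      map_add' := by intro a b; simp [add_smul, Finset.sum_add_distrib]
      map_smul' := by intro r a; simp [mul_smul, Finset.smul_sum] } with hL
  have hker : LinearMap.ker L = ⊥ := by
    rw [LinearMap.ker_eq_bot']
    intro m hm
    exact funext fun i => Fintype.linearIndependent_iff.1 hli m hm i
  have hset : {x | ∃ q : Fin n → ℝ, (∀ i, 0 ≤ q i) ∧ (∀ i, i ∉ T → q i = 0) ∧
      ∑ i, q i • w i = x} = L '' {q | ∀ i, 0 ≤ q i} := by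
    ext x
    constructor
    · rintro ⟨q, hq, hqT, rfl⟩
      refine ⟨fun i => q i.1, fun i => hq i.1, ?_⟩
      show ∑ i : {i // i ∈ T}, q i.1 • w i.1 = _
      rw [← Finset.sum_subtype T (fun i => Iff.rfl) (fun i => q i • w i)]
      exact Finset.sum_subset (Finset.subset_univ _) (fun i _ hi => by rw [hqT i hi, zero_smul])
    · rintro ⟨q, hq, rfl⟩
      refine ⟨fun i => if h : i ∈ T then q ⟨i, h⟩ else 0,
        fun i => by
          dsimp only
          by_cases h : i ∈ T
          · rw [dif_pos h]; exact hq ⟨i, h⟩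
          · rw [dif_neg h],
        fun i hi => by simp [hi], ?_⟩
      have e1 : ∑ i : Fin n, (fun i => if h : i ∈ T then q ⟨i, h⟩ else 0) i • w i
          = ∑ i ∈ T, (if h : i ∈ T then q ⟨i, h⟩ else 0) • w i :=
        (Finset.sum_subset (Finset.subset_univ T) (fun i _ hi => by simp [hi])).symm
      have e2 : ∑ i ∈ T, (if h : i ∈ T then q ⟨i, h⟩ else 0) • w i
          = ∑ i : {i // i ∈ T}, (if h : i.1 ∈ T then q ⟨i.1, h⟩ else 0) • w i.1 :=
        Finset.sum_subtype T (fun i => Iff.rfl) _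
      rw [e1, e2]
      exact Finset.sum_congr rfl fun i _ => by simp [i.2]
  rw [hset]
  have hclosed : IsClosed {q : {i // i ∈ T} → ℝ | ∀ i, 0 ≤ q i} := by
    have : {q : {i // i ∈ T} → ℝ | ∀ i, 0 ≤ q i} = ⋂ i, {q | 0 ≤ q i} := by
      ext q; simp [Set.mem_iInter]
    rw [this]
    exact isClosed_iInter fun i => isClosed_le continuous_const (continuous_apply i)
  exact (L.isClosedEmbedding_of_injective hker).isClosedMap _ hclosed

lemma isClosed_coneOf {n : ℕ} (w : Fin n → E) : IsClosed (coneOf w) := by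
  have heq : coneOf w = ⋃ T ∈ {T : Finset (Fin n) |
      LinearIndependent ℝ (fun i : {i // i ∈ T} => w i)},
      {x | ∃ q : Fin n → ℝ, (∀ i, 0 ≤ q i) ∧ (∀ i, i ∉ T → q i = 0) ∧
        ∑ i, q i • w i = x} := by
    ext x
    simp only [Set.mem_iUnion, Set.mem_setOf_eq]
    constructor
    · rintro ⟨q, hq, rfl⟩
      obtain ⟨q', hq', hsum, hli⟩ := cara w (Finset.univ.filter (fun i => q i ≠ 0)).card q
        le_rfl hq
      set T := Finset.univ.filter (fun i => q' i ≠ 0) with hT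
      have hTm : ∀ i, i ∈ T ↔ q' i ≠ 0 := fun i => by simp [hT]
      set e : {i // i ∈ T} ≃ {i // q' i ≠ 0} := Equiv.subtypeEquivRight hTm with he
      refine ⟨T, ?_, q', hq', fun i hi => by simpa [hT] using hi, hsum⟩
      have hfe : ((fun i : {i // q' i ≠ 0} => w i.1) ∘ e) = fun i : {i // i ∈ T} => w i.1 := by
        funext i; rw [Function.comp_apply, he, Equiv.subtypeEquivRight_apply]
      exact hfe ▸ hli.comp e e.injective
    · rintro ⟨T, _, q, hq, _, rfl⟩
      exact ⟨q, hq, rfl⟩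
  rw [heq]
  exact Set.Finite.isClosed_biUnion (Set.toFinite _) fun T hT => isClosed_coneSub w T hT




/-- separation of a point from a finitely generated cone -/
lemma sep_cone {n : ℕ} (w : Fin n → E) {z : E} (hz : z ∉ coneOf w) :
    ∃ φ : E →L[ℝ] ℝ, (∀ x ∈ coneOf w, φ x ≤ 0) ∧ 0 < φ z := by
  obtain ⟨φ, u, hu, huz⟩ :=
    geometric_hahn_banach_closed_point (convex_coneOf w) (isClosed_coneOf w) hz
  have hu0 : 0 < u := by simpa using hu 0 (zero_mem_coneOf w)
  refine ⟨φ, fun x hx => ?_, lt_trans hu0 huz⟩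
  by_contra h
  push_neg at h
  have ht : (0:ℝ) ≤ (u + 1) / φ x := div_nonneg (by linarith) h.le
  have := hu _ (smul_mem_coneOf hx ht)
  rw [map_smul, smul_eq_mul, div_mul_cancel₀ _ (ne_of_gt h)] at this
  linarith

/-- representation of a continuous linear functional on (Fin d → ℝ) × ℝ -/
lemma clm_repr {d : ℕ} (φ : ((Fin d → ℝ) × ℝ) →L[ℝ] ℝ) :
    ∃ ω : Fin d → ℝ, ∀ (x : Fin d → ℝ) (t : ℝ), φ (x, t) = dotp ω x + t * φ (0, 1) := by
  refine ⟨fun j => φ (Pi.single j 1, 0), fun x t => ?_⟩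
  have hx : ((x, t) : (Fin d → ℝ) × ℝ)
      = (∑ j, x j • ((Pi.single j 1 : Fin d → ℝ), (0:ℝ))) + t • ((0 : Fin d → ℝ), (1:ℝ)) := by
    refine Prod.ext ?_ ?_
    · simp only [Prod.fst_add, Prod.fst_sum, Prod.smul_fst, Prod.snd_add]
      funext j'
      simp [Pi.single_apply, Finset.sum_apply, Finset.sum_ite_eq']
    · simp [Prod.snd_sum]
  rw [hx, map_add, map_sum, map_smul, smul_eq_mul]
  congr 1
  rw [dotp]
  refine Finset.sum_congr rfl fun j _ => ?_
  rw [map_smul, smul_eq_mul, mul_comm]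

/-- Farkas lemma -/
lemma farkas {d n : ℕ} (v : Fin n → Fin d → ℝ) (b : Fin n → ℝ)
    (h : ∀ q : Fin n → ℝ, (∀ i, 0 ≤ q i) → ∑ i, q i • v i = 0 → ∑ i, q i * b i ≤ 0) :
    ∃ γ : Fin d → ℝ, ∀ i, b i ≤ dotp (v i) γ := by
  set w : Fin (n+1) → (Fin d → ℝ) × ℝ :=
    Fin.cons ((0 : Fin d → ℝ), (-1:ℝ)) (fun i => (v i, b i)) with hw
  have hz : ((0 : Fin d → ℝ), (1:ℝ)) ∉ coneOf w := by
    rintro ⟨q, hq, hsum⟩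
    rw [Fin.sum_univ_succ] at hsum
    have h1 : q 0 • ((0 : Fin d → ℝ), (-1:ℝ)) +
        ∑ i, q i.succ • ((v i, b i) : (Fin d → ℝ) × ℝ) = ((0 : Fin d → ℝ), (1:ℝ)) := by
      simpa [hw] using hsum
    have hfst : ∑ i, q i.succ • v i = 0 := by
      have := congrArg Prod.fst h1
      simpa [Prod.fst_sum] using this
    have hsnd : -q 0 + ∑ i, q i.succ * b i = 1 := by
      have := congrArg Prod.snd h1
      simpa [Prod.snd_sum] using this
    have := h (fun i => q i.succ) (fun i => hq i.succ) hfst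
    have := hq 0
    linarith
  obtain ⟨φ, hφ, hφz⟩ := sep_cone w hz
  obtain ⟨ω, hω⟩ := clm_repr φ
  have hα : 0 < φ (0, 1) := hφz
  refine ⟨(-(φ (0,1))⁻¹) • ω, fun i => ?_⟩
  have hwi : φ (v i, b i) ≤ 0 := by
    have := hφ (w i.succ) (mem_coneOf w i.succ)
    simpa [hw] using this
  rw [hω] at hwi
  have hdot : dotp (v i) ((-(φ (0,1))⁻¹) • ω) = -(φ (0,1))⁻¹ * dotp ω (v i) := by
    simp only [dotp, Pi.smul_apply, smul_eq_mul, Finset.mul_sum]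
    exact Finset.sum_congr rfl fun j _ => by ring
  rw [hdot]
  have h2 : dotp ω (v i) * (φ (0,1))⁻¹ ≤ (-(b i * φ (0,1))) * (φ (0,1))⁻¹ :=
    mul_le_mul_of_nonneg_right (by linarith) (inv_pos.2 hα).le
  have h3 : (-(b i * φ (0,1))) * (φ (0,1))⁻¹ = -b i := by field_simp
  rw [h3] at h2
  nlinarith [h2]


lemma dotp_comm {d : ℕ} (u v : Fin d → ℝ) : dotp u v = dotp v u :=
  Finset.sum_congr rfl fun _ _ => mul_comm _ _

lemma sum_mul_dotp {d k : ℕ} (p : Fin k → ℝ) (ξ : Fin k → Fin d → ℝ) (γ : Fin d → ℝ) :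
    ∑ i, p i * dotp (ξ i) γ = dotp (∑ i, p i • ξ i) γ := by
  simp only [dotp, Finset.mul_sum, Finset.sum_apply, Pi.smul_apply, smul_eq_mul,
    Finset.sum_mul]
  rw [Finset.sum_comm]
  exact Finset.sum_congr rfl fun i _ => Finset.sum_congr rfl fun j _ => by ring

lemma exists_RN {d k : ℕ} (ξ : Fin k → Fin d → ℝ)
    (hii : ¬ ∃ ω : Fin d → ℝ, ∀ i, 0 < dotp ω (ξ i)) :
    ∃ p : Fin k → ℝ, (∀ i, 0 ≤ p i) ∧ ∑ i, p i = 1 ∧ ∑ i, p i • ξ i = 0 := by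
  set w : Fin k → (Fin d → ℝ) × ℝ := fun i => (ξ i, 1) with hw
  by_cases hz : ((0 : Fin d → ℝ), (1:ℝ)) ∈ coneOf w
  · obtain ⟨q, hq, hsum⟩ := hz
    refine ⟨q, hq, ?_, ?_⟩
    · have := congrArg Prod.snd hsum
      simpa [hw, Prod.snd_sum] using this
    · have := congrArg Prod.fst hsum
      simpa [hw, Prod.fst_sum] using this
  · exfalso
    obtain ⟨φ, hφ, hφz⟩ := sep_cone w hz
    obtain ⟨ω, hω⟩ := clm_repr φ
    apply hii
    refine ⟨-ω, fun i => ?_⟩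
    have h1 : φ (ξ i, 1) ≤ 0 := by simpa [hw] using hφ (w i) (mem_coneOf w i)
    rw [hω] at h1
    have hd : dotp (-ω) (ξ i) = -dotp ω (ξ i) := by
      simp [dotp]
    rw [hd]
    have : (0:ℝ) < φ (0, 1) := hφz
    linarith


end Stmt9Aux

theorem stmt9 (d k : ℕ) (ξ : Fin k → (Fin d → ℝ)) (f : Fin k → ℝ)
    (hne : ∀ i, ξ i ≠ 0)
    -- only condition (ii): no ω has positive inner product with all the ξᵢ
    (hii : ¬ ∃ ω : Fin d → ℝ, ∀ i, 0 < dotp ω (ξ i)) :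
    -- the convex set of risk-neutral probability laws on {ξ₁,…,ξ_k}
    let RN : Set (Fin k → ℝ) :=
      { p | (∀ i, 0 ≤ p i) ∧ (∑ i, p i = 1) ∧ (∑ i, p i • ξ i = 0) }
    -- the minimax equals the maximum over extreme risk-neutral laws
    (∃ V : ℝ,
      IsLeast (Set.range fun γ : Fin d → ℝ => ⨆ i, (f i - dotp (ξ i) γ)) V ∧
      IsGreatest ((fun p : Fin k → ℝ => ∑ i, p i * f i) '' RN.extremePoints ℝ) V) ∧
    -- description of the supports of the extreme points: a family of size m+1 lying in an
    -- m-dimensional subspace (m ≤ d) and in general position within that subspace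
    (∀ p ∈ RN.extremePoints ℝ, ∃ (m : ℕ) (W : Submodule ℝ (Fin d → ℝ)),
      m ≤ d ∧ Module.finrank ℝ W = m ∧
      (∀ i ∈ Function.support p, ξ i ∈ W) ∧
      (Function.support p).ncard = m + 1 ∧
      (∀ T : Set (Fin k), T ⊆ Function.support p → T.ncard = m →
        LinearIndependent ℝ (fun i : T => ξ i)) ∧
      ¬ ∃ ω ∈ W, ∀ i ∈ Function.support p, 0 < dotp ω (ξ i)) := by
  intro RN
  classical
  have hk0 : k ≠ 0 := by rintro rfl; exact hii ⟨0, fun i => i.elim0⟩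
  haveI : Nonempty (Fin k) := ⟨⟨0, Nat.pos_of_ne_zero hk0⟩⟩
  obtain ⟨p₀, hp₀⟩ := Stmt9Aux.exists_RN ξ hii
  have hRNne : RN.Nonempty := ⟨p₀, hp₀⟩
  -- RN is compact
  have hclosed : IsClosed RN := by
    have h1 : IsClosed {p : Fin k → ℝ | ∀ i, 0 ≤ p i} := by
      have : {p : Fin k → ℝ | ∀ i, 0 ≤ p i} = ⋂ i, {p | 0 ≤ p i} := by
        ext q; simp [Set.mem_iInter]
      rw [this]
      exact isClosed_iInter fun i => isClosed_le continuous_const (continuous_apply i)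
    have h2 : IsClosed {p : Fin k → ℝ | ∑ i, p i = 1} :=
      isClosed_eq (continuous_finset_sum _ fun i _ => continuous_apply i) continuous_const
    have h3 : IsClosed {p : Fin k → ℝ | ∑ i, p i • ξ i = 0} :=
      isClosed_eq (continuous_finset_sum _ fun i _ => (continuous_apply i).smul continuous_const)
        continuous_const
    have : RN = {p : Fin k → ℝ | ∀ i, 0 ≤ p i} ∩ ({p | ∑ i, p i = 1} ∩ {p | ∑ i, p i • ξ i = 0}) := by
      ext q; simp only [Set.mem_inter_iff, Set.mem_setOf_eq]; rfl
    rw [this]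
    exact h1.inter (h2.inter h3)
  have hcomp : IsCompact RN := by
    refine IsCompact.of_isClosed_subset (isCompact_Icc
      (a := (fun _ => (0:ℝ) : Fin k → ℝ)) (b := fun _ => 1)) hclosed ?_
    rintro p ⟨h1, h2, _⟩
    constructor
    · exact fun i => h1 i
    · intro i
      have : p i ≤ ∑ j, p j := Finset.single_le_sum (fun j _ => h1 j) (Finset.mem_univ i)
      rw [h2] at this; exact this
  -- the functional
  set l : (Fin k → ℝ) →L[ℝ] ℝ := ∑ i, f i • ContinuousLinearMap.proj i with hl
  have hlval : ∀ p : Fin k → ℝ, l p = ∑ i, p i * f i := by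
    intro p
    simp [hl, ContinuousLinearMap.sum_apply, ContinuousLinearMap.proj_apply, mul_comm]
  obtain ⟨pstar, hpstarRN, hpstarmax⟩ := hcomp.exists_isMaxOn hRNne l.continuous.continuousOn
  set V := ∑ i, pstar i * f i with hV
  have hmax : ∀ p ∈ RN, ∑ i, p i * f i ≤ V := by
    intro p hp
    have := isMaxOn_iff.1 hpstarmax p hp
    rwa [hlval, hlval] at this
  -- the exposed face of maximizers has an extreme point
  set M := {x ∈ RN | ∀ y ∈ RN, l y ≤ l x} with hM
  have hexp : IsExposed ℝ RN M := fun _ => ⟨l, rfl⟩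
  have hMmax : ∀ x ∈ M, ∑ i, x i * f i = V := by
    rintro x ⟨hx, hxm⟩
    refine le_antisymm (hmax x hx) ?_
    have := hxm pstar hpstarRN
    rw [hlval, hlval] at this
    rw [hV]; exact this
  have hMne : M.Nonempty := ⟨pstar, hpstarRN, fun y hy => isMaxOn_iff.1 hpstarmax y hy⟩
  have hMcomp : IsCompact M := by
    have : M = RN ∩ {x | V ≤ l x} := by
      ext x
      constructor
      · rintro ⟨hx, hxm⟩
        refine ⟨hx, ?_⟩
        have := hxm pstar hpstarRN
        rw [hlval pstar] at this
        simpa using this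
      · rintro ⟨hx, hVx⟩
        exact ⟨hx, fun y hy => le_trans (by rw [hlval]; exact le_trans (hmax y hy) hVx) le_rfl⟩
    rw [this]
    exact hcomp.inter_right (isClosed_le continuous_const l.continuous)
  obtain ⟨xe, hxe⟩ := hMcomp.extremePoints_nonempty hMne
  have hxeRN : xe ∈ RN.extremePoints ℝ :=
    hexp.isExtreme.extremePoints_subset_extremePoints hxe
  have hxeV : (fun p : Fin k → ℝ => ∑ i, p i * f i) xe = V := hMmax xe (extremePoints_subset hxe)
  -- weak duality
  have hbdd : ∀ γ : Fin d → ℝ, BddAbove (Set.range fun i => f i - dotp (ξ i) γ) :=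
    fun γ => Set.Finite.bddAbove (Set.finite_range _)
  have hweak : ∀ p ∈ RN, ∀ γ : Fin d → ℝ, ∑ i, p i * f i ≤ ⨆ i, (f i - dotp (ξ i) γ) := by
    intro p hp γ
    obtain ⟨hp1, hp2, hp3⟩ := hp
    have h0 : ∑ i, p i * dotp (ξ i) γ = 0 := by
      rw [Stmt9Aux.sum_mul_dotp, hp3]
      simp [dotp]
    have h1 : ∑ i, p i * f i = ∑ i, p i * (f i - dotp (ξ i) γ) := by
      simp only [mul_sub, Finset.sum_sub_distrib, h0, sub_zero]
    rw [h1]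
    calc ∑ i, p i * (f i - dotp (ξ i) γ)
        ≤ ∑ i, p i * (⨆ j, (f j - dotp (ξ j) γ)) :=
          Finset.sum_le_sum fun i _ => mul_le_mul_of_nonneg_left (le_ciSup (hbdd γ) i) (hp1 i)
      _ = ⨆ j, (f j - dotp (ξ j) γ) := by rw [← Finset.sum_mul, hp2, one_mul]
  -- strong duality via Farkas
  have hfark : ∃ γ : Fin d → ℝ, ∀ i, f i - V ≤ dotp (ξ i) γ := by
    apply Stmt9Aux.farkas
    intro q hq hq0
    by_cases hqs : (∑ i, q i) = 0
    · have hq' : ∀ i, q i = 0 := fun i =>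
        (Finset.sum_eq_zero_iff_of_nonneg (fun j _ => hq j)).1 hqs i (Finset.mem_univ i)
      simp [hq']
    · have hspos : 0 < ∑ i, q i :=
        lt_of_le_of_ne (Finset.sum_nonneg fun i _ => hq i) (Ne.symm hqs)
      have hpmem : (fun i => q i / (∑ j, q j)) ∈ RN := by
        refine ⟨fun i => div_nonneg (hq i) hspos.le, ?_, ?_⟩
        · rw [← Finset.sum_div]; exact div_self hqs
        · have : ∑ i, (q i / (∑ j, q j)) • ξ i = (∑ j, q j)⁻¹ • ∑ i, q i • ξ i := by
            rw [Finset.smul_sum]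
            exact Finset.sum_congr rfl fun i _ => by
              rw [smul_smul, div_eq_mul_inv, mul_comm]
          rw [this, hq0, smul_zero]
      have h1 := hmax _ hpmem
      have h2 : ∑ i, (q i / (∑ j, q j)) * f i = (∑ i, q i * f i) / (∑ j, q j) := by
        rw [Finset.sum_div]
        exact Finset.sum_congr rfl fun i _ => by ring
      rw [h2, div_le_iff₀ hspos] at h1
      have h3 : ∑ i, q i * (f i - V) = (∑ i, q i * f i) - (∑ i, q i) * V := by
        simp only [mul_sub, Finset.sum_sub_distrib, Finset.sum_mul]
      rw [h3]
      linarith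
  obtain ⟨γ₀, hγ₀⟩ := hfark
  constructor
  · refine ⟨V, ⟨⟨γ₀, ?_⟩, ?_⟩, ⟨xe, hxeRN, hxeV⟩, ?_⟩
    · refine le_antisymm (ciSup_le fun i => by linarith [hγ₀ i]) ?_
      exact hV ▸ hweak pstar hpstarRN γ₀
    · rintro y ⟨γ, rfl⟩
      exact hV ▸ hweak pstar hpstarRN γ
    · rintro y ⟨p, hpext, rfl⟩
      exact hmax p (extremePoints_subset hpext)
  · -- part 2
    intro p hpext
    obtain ⟨hpRN, hpext'⟩ := hpext
    obtain ⟨hp1, hp2, hp3⟩ := hpRN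
    -- key: any mean-zero risk-neutral perturbation supported on supp p is trivial
    have key : ∀ c : Fin k → ℝ, (∀ i, p i = 0 → c i = 0) → ∑ i, c i = 0 →
        ∑ i, c i • ξ i = 0 → c = 0 := by
      intro c hc hc1 hc2
      by_contra hcne
      have hsne : (Finset.univ.filter (fun i => c i ≠ 0)).Nonempty := by
        obtain ⟨i, hi⟩ := Function.ne_iff.1 hcne
        exact ⟨i, Finset.mem_filter.2 ⟨Finset.mem_univ i, by simpa using hi⟩⟩
      set sF := Finset.univ.filter (fun i => c i ≠ 0) with hsF
      set ε := sF.inf' hsne (fun i => p i / |c i|) with hε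
      have hεpos : 0 < ε := by
        rw [hε, Finset.lt_inf'_iff]
        intro i hi
        have hci : c i ≠ 0 := by simpa [hsF] using hi
        have hpi : 0 < p i := lt_of_le_of_ne (hp1 i) (fun h => hci (hc i h.symm))
        exact div_pos hpi (abs_pos.2 hci)
      have hbound : ∀ i, |ε * c i| ≤ p i := by
        intro i
        by_cases h : c i = 0
        · simp [h, hp1 i]
        · have h1 : ε ≤ p i / |c i| := by
            rw [hε]; exact Finset.inf'_le _ (by simp [hsF, h])
          rw [abs_mul, abs_of_pos hεpos]
          exact (le_div_iff₀ (abs_pos.2 h)).1 h1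
      have hxmem : p - ε • c ∈ RN := by
        refine ⟨fun i => ?_, ?_, ?_⟩
        · have := (abs_le.1 (hbound i)).2
          simp only [Pi.sub_apply, Pi.smul_apply, smul_eq_mul]
          linarith
        · simp only [Pi.sub_apply, Pi.smul_apply, smul_eq_mul, Finset.sum_sub_distrib,
            ← Finset.mul_sum, hc1, hp2, mul_zero, sub_zero]
        · simp only [Pi.sub_apply, Pi.smul_apply, smul_eq_mul, sub_smul, mul_smul,
            Finset.sum_sub_distrib, hp3, ← Finset.smul_sum, hc2, smul_zero, sub_zero]
      have hymem : p + ε • c ∈ RN := by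
        refine ⟨fun i => ?_, ?_, ?_⟩
        · have := (abs_le.1 (hbound i)).1
          simp only [Pi.add_apply, Pi.smul_apply, smul_eq_mul]
          linarith
        · simp only [Pi.add_apply, Pi.smul_apply, smul_eq_mul, Finset.sum_add_distrib,
            ← Finset.mul_sum, hc1, hp2, mul_zero, add_zero]
        · simp only [Pi.add_apply, Pi.smul_apply, smul_eq_mul, add_smul, mul_smul,
            Finset.sum_add_distrib, hp3, ← Finset.smul_sum, hc2, smul_zero, add_zero]
      have hseg : p ∈ openSegment ℝ (p - ε • c) (p + ε • c) := by
        refine ⟨1/2, 1/2, by norm_num, by norm_num, by norm_num, ?_⟩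
        module
      have hx' := hpext' hxmem hymem hseg
      have hεc : ε • c = 0 := by
        have h := congrArg (fun z => p - z) hx'
        simpa using sub_eq_self.1 hx'
      rcases smul_eq_zero.1 hεc with h | h
      · exact absurd h (ne_of_gt hεpos)
      · exact hcne h
    -- support as finset
    set Sf := Finset.univ.filter (fun i => p i ≠ 0) with hSf
    have hSset : Function.support p = ↑Sf := by
      ext i; simp [hSf, Function.mem_support]
    have hSfne : Sf.Nonempty := by
      by_contra h
      rw [Finset.not_nonempty_iff_eq_empty] at h
      have hz : ∀ i, p i = 0 := by
        intro i
        by_contra hi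
        have : i ∈ Sf := by simp [hSf, hi]
        simp [h] at this
      rw [Finset.sum_congr rfl (fun i _ => hz i)] at hp2
      simp at hp2
    set W := Submodule.span ℝ (ξ '' Function.support p) with hW
    have hmemW : ∀ i ∈ Function.support p, ξ i ∈ W :=
      fun i hi => Submodule.subset_span (Set.mem_image_of_mem ξ hi)
    set m := Module.finrank ℝ W with hm
    -- card Sf ≤ m + 1
    have hcard_le : Sf.card ≤ m + 1 := by
      have hmem' : ∀ i : {i // i ∈ Sf}, ξ i.1 ∈ W := by
        intro i
        apply hmemW
        rw [hSset]
        exact_mod_cast i.2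
      set u : {i // i ∈ Sf} → W × ℝ := fun i => (⟨ξ i.1, hmem' i⟩, 1) with hu
      have hli : LinearIndependent ℝ u := by
        rw [Fintype.linearIndependent_iff]
        intro g hg
        set c : Fin k → ℝ := fun i => if h : i ∈ Sf then g ⟨i, h⟩ else 0 with hcdef
        have hsub1 : ∑ i, c i • ξ i = ∑ i : {i // i ∈ Sf}, g i • ξ i.1 := by
          rw [← Finset.sum_subset (Finset.subset_univ Sf)
            (fun i _ hi => by simp [hcdef, hi]),
            Finset.sum_subtype Sf (fun i => Iff.rfl) (fun i => c i • ξ i)]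
          exact Finset.sum_congr rfl fun i _ => by simp [hcdef, i.2]
        have hsub2 : ∑ i, c i = ∑ i : {i // i ∈ Sf}, g i := by
          rw [← Finset.sum_subset (Finset.subset_univ Sf)
            (fun i _ hi => by simp [hcdef, hi]),
            Finset.sum_subtype Sf (fun i => Iff.rfl) (fun i => c i)]
          exact Finset.sum_congr rfl fun i _ => by simp [hcdef, i.2]
        have hfst : ∑ i : {i // i ∈ Sf}, g i • ξ i.1 = 0 := by
          have h1 := congrArg (fun z : W × ℝ => (z.1 : Fin d → ℝ)) hg
          simpa [hu, Prod.fst_sum] using h1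
        have hsnd : ∑ i : {i // i ∈ Sf}, g i = 0 := by
          have h1 := congrArg Prod.snd hg
          simpa [hu, Prod.snd_sum] using h1
        have hc0 := key c
          (fun i hi => by
            have : i ∉ Sf := by simp [hSf, hi]
            simp [hcdef, this])
          (hsub2.trans hsnd) (hsub1.trans hfst)
        intro i
        have := congrFun hc0 i.1
        simpa [hcdef, i.2] using this
      have h2 := hli.fintype_card_le_finrank
      rwa [Fintype.card_coe, Module.finrank_prod, Module.finrank_self] at h2
    -- m < card
    have hlt : m < Sf.card := by
      have hnli : ¬ LinearIndependent ℝ (fun i : {i // i ∈ Sf} => ξ i.1) := by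
        rw [Fintype.not_linearIndependent_iff]
        refine ⟨fun i => p i.1, ?_, ?_⟩
        · have h1 : ∑ i : {i // i ∈ Sf}, p i.1 • ξ i.1 = ∑ i ∈ Sf, p i • ξ i :=
            Finset.sum_coe_sort Sf (fun i => p i • ξ i)
          rw [h1, Finset.sum_subset (Finset.subset_univ Sf) (fun i _ hi => by
            have : p i = 0 := by simpa [hSf] using hi
            simp [this])]
          exact hp3
        · obtain ⟨i, hi⟩ := hSfne
          exact ⟨⟨i, hi⟩, by simpa [hSf] using hi⟩
      have hne2 : Fintype.card {i // i ∈ Sf} ≠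
          Set.finrank ℝ (Set.range fun i : {i // i ∈ Sf} => ξ i.1) :=
        fun h => hnli (linearIndependent_iff_card_eq_finrank_span.2 h)
      have hle2 : Set.finrank ℝ (Set.range fun i : {i // i ∈ Sf} => ξ i.1) ≤
          Fintype.card {i // i ∈ Sf} := finrank_range_le_card _
      have hmW : Set.finrank ℝ (Set.range fun i : {i // i ∈ Sf} => ξ i.1) = m := by
        rw [hm, hW, hSset, Set.image_eq_range]
        rfl
      rw [Fintype.card_coe] at hne2 hle2
      rw [hmW] at hne2 hle2
      omega
    have hcard : Sf.card = m + 1 := by omega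
    refine ⟨m, W, ?_, rfl, hmemW, ?_, ?_, ?_⟩
    · have h1 := Submodule.finrank_le W
      have h2 : Module.finrank ℝ (Fin d → ℝ) = d := by
        rw [Module.finrank_pi]
        simp
      rw [h2] at h1
      exact hm ▸ h1
    · rw [hSset, Set.ncard_coe_finset, hcard]
    · intro T hTsub hTcard
      by_contra hnli
      haveI : Fintype T := (Set.toFinite T).fintype
      obtain ⟨g, hg0, j₀, hj₀⟩ := Fintype.not_linearIndependent_iff.1 hnli
      set c : Fin k → ℝ := fun i => if h : i ∈ T then g ⟨i, h⟩ else 0 with hcdef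
      have hcsum : ∑ i, c i • ξ i = 0 := by
        have h1 : ∑ i, c i • ξ i = ∑ i ∈ T.toFinset, c i • ξ i := by
          refine (Finset.sum_subset (Finset.subset_univ _) (fun i _ hi => ?_)).symm
          rw [Set.mem_toFinset] at hi
          simp [hcdef, hi]
        have h2 : ∑ i ∈ T.toFinset, c i • ξ i = ∑ i : T, g i • ξ i.1 := by
          rw [Finset.sum_subtype T.toFinset (fun i => Set.mem_toFinset) (fun i => c i • ξ i)]
          exact Finset.sum_congr rfl fun i _ => by simp [hcdef, i.2]
        rw [h1, h2, hg0]
      set s₀ := ∑ i, c i with hs₀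
      set c' : Fin k → ℝ := fun i => c i - s₀ * p i with hc'
      have h3 : ∀ i, p i = 0 → c' i = 0 := by
        intro i hi
        have hiT : i ∉ T := fun h => (hTsub h) hi
        simp [hc', hcdef, hiT, hi]
      have h4 : ∑ i, c' i = 0 := by
        simp only [hc', Finset.sum_sub_distrib, ← Finset.mul_sum, hp2, mul_one, hs₀, sub_self]
      have h5 : ∑ i, c' i • ξ i = 0 := by
        simp only [hc', sub_smul, mul_smul, Finset.sum_sub_distrib, hcsum,
          ← Finset.smul_sum, hp3, smul_zero, sub_zero]
      have hc'0 := key c' h3 h4 h5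
      have hcp : ∀ i, c i = s₀ * p i := by
        intro i
        have := congrFun hc'0 i
        simp only [hc', Pi.zero_apply] at this
        linarith [this]
      have hTne : T ≠ Function.support p := by
        intro h
        rw [h, hSset, Set.ncard_coe_finset, hcard] at hTcard
        omega
      obtain ⟨j, hjS, hjT⟩ := Set.exists_of_ssubset (ssubset_of_subset_of_ne hTsub hTne)
      have hcj : c j = 0 := by simp [hcdef, hjT]
      have hpj : p j ≠ 0 := hjS
      have hs00 : s₀ = 0 := by
        have := hcp j
        rw [hcj] at this
        rcases mul_eq_zero.1 this.symm with h | h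
        · exact h
        · exact absurd h hpj
      apply hj₀
      have := hcp j₀.1
      rw [hs00, zero_mul] at this
      simpa [hcdef, j₀.2] using this
    · rintro ⟨ω, hωW, hωpos⟩
      have hzero : ∑ i, p i * dotp ω (ξ i) = 0 := by
        have h1 : ∑ i, p i * dotp ω (ξ i) = ∑ i, p i * dotp (ξ i) ω :=
          Finset.sum_congr rfl fun i _ => by rw [Stmt9Aux.dotp_comm]
        rw [h1, Stmt9Aux.sum_mul_dotp, hp3]
        simp [dotp]
      have hpos : 0 < ∑ i, p i * dotp ω (ξ i) := by
        rw [← Finset.sum_subset (Finset.subset_univ Sf) (fun i _ hi => by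
          have : p i = 0 := by simpa [hSf] using hi
          simp [this])]
        refine Finset.sum_pos (fun i hi => ?_) hSfne
        have hpi : p i ≠ 0 := by simpa [hSf] using hi
        exact mul_pos (lt_of_le_of_ne (hp1 i) (Ne.symm hpi)) (hωpos i hpi)
      linarith
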